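/- For all integers n and k with 2 ≤ k ≤ n, the k-connectivity of the complete graph K_n equals n - ⌈k/2⌉. -/

import Mathlib

/-- `ℓ` pairwise edge-disjoint trees in `G`, each containing `S`, whose pairwise
vertex intersections equal exactly `S` (an internally disjoint set of trees connecting `S`). -/
def InternallyDisjointTrees {V : Type*} (G : SimpleGraph V) (S : Set V) (ℓ : ℕ) : Prop :=
  ∃ T : Fin ℓ → G.Subgraph,
    (∀ n, (T n).coe.IsTree) ∧
    (∀ n, S ⊆ (T n).verts) ∧
    (∀ m n, m ≠ n → (T m).verts ∩ (T n).verts = S) ∧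
    (∀ m n, m ≠ n → (T m).edgeSet ∩ (T n).edgeSet = ∅)

/-- `κ(S)`: the maximum number of internally disjoint trees connecting `S`. -/
noncomputable def kappaS {V : Type*} (G : SimpleGraph V) (S : Set V) : ℕ :=
  sSup {ℓ | InternallyDisjointTrees G S ℓ}

/-- The `k`-connectivity `κ_k(G)`: the minimum of `κ(S)` over all `k`-subsets `S`. -/
noncomputable def kappaK {V : Type*} (G : SimpleGraph V) (k : ℕ) : ℕ :=
  sInf {n | ∃ S : Set V, S.ncard = k ∧ kappaS G S = n}

/-! ### Auxiliary material -/

open SimpleGraph Set Function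

section DStar

variable {V : Type*}

/-- A generalized double star subgraph of the complete graph. -/
def dstar (W : Set V) (c₁ c₂ : V) (f : V → V) : SimpleGraph.Subgraph (⊤ : SimpleGraph V) where
  verts := W
  Adj x y := x ∈ W ∧ y ∈ W ∧ x ≠ y ∧
    ((x = c₁ ∧ y = c₂) ∨ (x = c₂ ∧ y = c₁) ∨
      (x ∉ ({c₁, c₂} : Set V) ∧ y = f x) ∨ (y ∉ ({c₁, c₂} : Set V) ∧ x = f y))
  adj_sub := by
    rintro x y ⟨-, -, h, -⟩
    exact h
  edge_vert := by
    rintro x y ⟨h, -⟩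
    exact h
  symm := by
    constructor
    rintro x y ⟨h1, h2, h3, h4⟩
    exact ⟨h2, h1, h3.symm, by tauto⟩

lemma dstar_verts (W : Set V) (c₁ c₂ : V) (f : V → V) : (dstar W c₁ c₂ f).verts = W := rfl

lemma dstar_adj {W : Set V} {c₁ c₂ : V} {f : V → V} {x y : V} :
    (dstar W c₁ c₂ f).Adj x y ↔ x ∈ W ∧ y ∈ W ∧ x ≠ y ∧
    ((x = c₁ ∧ y = c₂) ∨ (x = c₂ ∧ y = c₁) ∨
      (x ∉ ({c₁, c₂} : Set V) ∧ y = f x) ∨ (y ∉ ({c₁, c₂} : Set V) ∧ x = f y)) := Iff.rfl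

/-- Every edge of a double star is the central edge or a pendant edge. -/
lemma dstar_adj_cases {W : Set V} {c₁ c₂ : V} {f : V → V} {x y : V}
    (h : (dstar W c₁ c₂ f).Adj x y) :
    s(x, y) = s(c₁, c₂) ∨
      ∃ z, z ∈ W ∧ z ≠ c₁ ∧ z ≠ c₂ ∧ s(x, y) = s(z, f z) := by
  obtain ⟨hx, hy, hne, h⟩ := h
  rcases h with ⟨rfl, rfl⟩ | ⟨rfl, rfl⟩ | ⟨hx', rfl⟩ | ⟨hy', rfl⟩
  · exact Or.inl rfl
  · exact Or.inl (Sym2.eq_swap)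
  · exact Or.inr ⟨x, hx, by simpa using (fun h => hx' (by simp [h])),
      by simpa using (fun h => hx' (by simp [h])), rfl⟩
  · exact Or.inr ⟨y, hy, by simpa using (fun h => hy' (by simp [h])),
      by simpa using (fun h => hy' (by simp [h])), Sym2.eq_swap⟩

/-- If all vertices outside `{c₁, c₂}` have at most one neighbour, the graph is acyclic. -/
lemma isAcyclic_of_almost_all_deg_one {α : Type*} (G : SimpleGraph α) (c₁ c₂ : α)
    (h : ∀ x y z, x ≠ c₁ → x ≠ c₂ → G.Adj x y → G.Adj x z → y = z) :
    G.IsAcyclic := by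
  intro v c hc
  have h3 : 3 ≤ c.length := hc.three_le_length
  have hnodup : c.support.tail.Nodup := hc.support_nodup
  have hlen : c.support.tail.length = c.length := by
    simp [SimpleGraph.Walk.length_support]
  classical
  have : ∃ x ∈ c.support.tail, x ≠ c₁ ∧ x ≠ c₂ := by
    by_contra hcon
    push_neg at hcon
    have hsub : c.support.tail.toFinset ⊆ {c₁, c₂} := by
      intro x hx
      rcases Classical.em (x = c₁) with h1 | h1
      · simp [h1]
      · simp [hcon x (List.mem_toFinset.mp hx) h1]
    have := Finset.card_le_card hsub
    rw [List.toFinset_card_of_nodup hnodup] at this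
    have h2 : ({c₁, c₂} : Finset α).card ≤ 2 := Finset.card_insert_le _ _ |>.trans (by simp)
    omega
  obtain ⟨x, hxmem, hx1, hx2⟩ := this
  have hxsup : x ∈ c.support := List.mem_of_mem_tail hxmem
  have hrot : (c.rotate x hxsup).IsCycle := hc.rotate hxsup
  set d := c.rotate x hxsup with hd
  clear_value d
  have hnn : ¬ d.Nil := hrot.not_nil
  rw [SimpleGraph.Walk.not_nil_iff] at hnn
  obtain ⟨y, hadj, p, rfl⟩ := hnn
  rw [SimpleGraph.Walk.cons_isCycle_iff] at hrot
  obtain ⟨hp, hnotmem⟩ := hrot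
  have hpnn : ¬ p.reverse.Nil := by
    rw [SimpleGraph.Walk.not_nil_iff_lt_length]
    rw [SimpleGraph.Walk.length_reverse]
    have h3' : 3 ≤ (c.rotate x hxsup).length := ((hc.rotate hxsup)).three_le_length
    rw [← hd] at h3'
    have hlen2 : (SimpleGraph.Walk.cons hadj p).length = p.length + 1 := by simp
    omega
  rw [SimpleGraph.Walk.not_nil_iff] at hpnn
  obtain ⟨z, hadj', q, hq⟩ := hpnn
  have hz : z = y := h x z y hx1 hx2 hadj' hadj
  subst hz
  apply hnotmem
  have : s(x, z) ∈ p.reverse.edges := by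
    rw [hq]
    simp
  rw [SimpleGraph.Walk.edges_reverse, List.mem_reverse] at this
  exact this

lemma dstar_isTree {W : Set V} {c₁ c₂ : V} {f : V → V}
    (h1 : c₁ ∈ W) (h2 : c₂ ∈ W) (hne : c₁ ≠ c₂)
    (hf : ∀ x, x ∈ W → x ≠ c₁ → x ≠ c₂ → f x = c₁ ∨ f x = c₂) :
    (dstar W c₁ c₂ f).coe.IsTree := by
  constructor
  · have hne' : Nonempty ((dstar W c₁ c₂ f).verts : Set V) := ⟨⟨c₁, h1⟩⟩
    refine SimpleGraph.Connected.mk fun a b => ?_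
    have key : ∀ a : (dstar W c₁ c₂ f).verts, (dstar W c₁ c₂ f).coe.Reachable a ⟨c₁, h1⟩ := by
      rintro ⟨a, ha⟩
      have hcc : (dstar W c₁ c₂ f).coe.Adj ⟨c₂, h2⟩ ⟨c₁, h1⟩ :=
        ⟨h2, h1, hne.symm, by tauto⟩
      rcases Classical.em (a = c₁) with rfl | ha1
      · rfl
      rcases Classical.em (a = c₂) with rfl | ha2
      · exact hcc.reachable
      rcases hf a ha ha1 ha2 with hfa | hfa
      · have : (dstar W c₁ c₂ f).coe.Adj ⟨a, ha⟩ ⟨c₁, h1⟩ := by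
          refine ⟨ha, h1, ha1, ?_⟩
          right; right; left
          exact ⟨by simp [ha1, ha2], hfa.symm⟩
        exact this.reachable
      · have : (dstar W c₁ c₂ f).coe.Adj ⟨a, ha⟩ ⟨c₂, h2⟩ := by
          refine ⟨ha, h2, ha2, ?_⟩
          right; right; left
          exact ⟨by simp [ha1, ha2], hfa.symm⟩
        exact this.reachable.trans hcc.reachable
    exact (key a).trans (key b).symm
  · apply isAcyclic_of_almost_all_deg_one _ ⟨c₁, h1⟩ ⟨c₂, h2⟩
    rintro ⟨x, hx⟩ ⟨y, hy⟩ ⟨z, hz⟩ hx1 hx2 haxy haxz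
    have hx1' : x ≠ c₁ := fun h => hx1 (Subtype.ext h)
    have hx2' : x ≠ c₂ := fun h => hx2 (Subtype.ext h)
    have hy' : y = f x := by
      rcases haxy with ⟨-, -, -, h⟩
      rcases h with ⟨h, -⟩ | ⟨h, -⟩ | ⟨-, h⟩ | ⟨hy0, h⟩
      · exact absurd h hx1'
      · exact absurd h hx2'
      · exact h
      · exact absurd ((hf y hy (by simpa using fun hh => hy0 (by simp [hh]))
          (by simpa using fun hh => hy0 (by simp [hh]))).resolve_left
            (fun hh => hx1' (h.trans hh))) (fun hh => hx2' (h.trans hh))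
    have hz' : z = f x := by
      rcases haxz with ⟨-, -, -, h⟩
      rcases h with ⟨h, -⟩ | ⟨h, -⟩ | ⟨-, h⟩ | ⟨hz0, h⟩
      · exact absurd h hx1'
      · exact absurd h hx2'
      · exact h
      · exact absurd ((hf z hz (by simpa using fun hh => hz0 (by simp [hh]))
          (by simpa using fun hh => hz0 (by simp [hh]))).resolve_left
            (fun hh => hx1' (h.trans hh))) (fun hh => hx2' (h.trans hh))
    exact Subtype.ext (hy'.trans hz'.symm)

end DStar

section UpperBound

lemma subgraph_edgeSet_ncard {V : Type*} [Fintype V] (T : SimpleGraph.Subgraph (⊤ : SimpleGraph V))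
    (hT : T.coe.IsTree) : T.edgeSet.ncard + 1 = T.verts.ncard := by
  classical
  letI : Fintype T.verts := T.verts.toFinite.fintype
  letI : Fintype T.coe.edgeSet := Fintype.ofFinite _
  have hcard := hT.card_edgeFinset
  have h1 : T.edgeSet = Sym2.map (Subtype.val) '' T.coe.edgeSet :=
    (SimpleGraph.Subgraph.image_coe_edgeSet_coe T).symm
  have h2 : T.edgeSet.ncard = T.coe.edgeSet.ncard := by
    rw [h1]
    exact Set.ncard_image_of_injective _ (Sym2.map.injective Subtype.val_injective)
  have h3 : T.coe.edgeSet.ncard = T.coe.edgeFinset.card := by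
    rw [SimpleGraph.edgeFinset]
    simp [Set.ncard_eq_toFinset_card']
  have h4 : T.verts.ncard = Fintype.card T.verts := by
    rw [Set.ncard_eq_toFinset_card', Set.toFinset_card]
  rw [h2, h3, h4, hcard]

lemma upper_bound {n k ℓ : ℕ} (hk2 : 2 ≤ k) (S : Set (Fin n)) (hS : S.ncard = k)
    (h : InternallyDisjointTrees (⊤ : SimpleGraph (Fin n)) S ℓ) : ℓ ≤ n - (k + 1) / 2 := by
  classical
  obtain ⟨T, htree, hsub, hvert, hedge⟩ := h
  have hkn : k ≤ n := by
    have := Set.ncard_le_ncard (Set.subset_univ S) (Set.finite_univ (α := Fin n))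
    rw [hS, Set.ncard_univ, Nat.card_eq_fintype_card, Fintype.card_fin] at this
    exact this
  haveI : Nonempty (Fin n) := ⟨⟨0, by omega⟩⟩
  set A : Finset (Fin ℓ) := Finset.univ.filter (fun i => (T i).verts = S) with hA
  have hSc : (Sᶜ : Set (Fin n)).ncard = n - k := by
    have := Set.ncard_add_ncard_compl S
    simp only [Nat.card_eq_fintype_card, Fintype.card_fin] at this
    omega
  have hBcard : Aᶜ.card ≤ n - k := by
    have hpick : ∀ i ∈ Aᶜ, ∃ x, x ∈ (T i).verts ∧ x ∉ S := by
      intro i hi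
      simp only [Finset.mem_compl, hA, Finset.mem_filter, Finset.mem_univ, true_and] at hi
      rcases Set.exists_of_ssubset (ssubset_of_subset_of_ne (hsub i) (Ne.symm hi)) with ⟨x, hx1, hx2⟩
      exact ⟨x, hx1, hx2⟩
    choose φ hφ1 hφ2 using hpick
    have : Aᶜ.card ≤ (Sᶜ : Set (Fin n)).toFinset.card := by
      apply Finset.card_le_card_of_injOn
        (fun i => if hi : i ∈ Aᶜ then φ i hi else Classical.arbitrary _)
      · intro i hi
        simp only [Finset.mem_coe] at hi
        simp only [hi, dif_pos, Set.mem_toFinset, Set.mem_compl_iff, Set.coe_toFinset]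
        exact hφ2 i hi
      · intro i hi j hj hij
        simp only [Finset.mem_coe] at hi hj
        simp only [dif_pos hi, dif_pos hj] at hij
        by_contra hne
        have := hvert i j hne
        have hmem : φ i hi ∈ (T i).verts ∩ (T j).verts := ⟨hφ1 i hi, hij ▸ hφ1 j hj⟩
        rw [this] at hmem
        exact hφ2 i hi hmem
    have e1 : (Sᶜ : Set (Fin n)).toFinset.card = n - k := by
      rw [← Set.ncard_eq_toFinset_card']
      exact hSc
    omega
  have hAcard : A.card ≤ k / 2 := by
    set E : Fin ℓ → Finset (Sym2 (Fin n)) := fun i => (T i).edgeSet.toFinset with hE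
    have hEcard : ∀ i ∈ A, (E i).card = k - 1 := by
      intro i hi
      simp only [hA, Finset.mem_filter, Finset.mem_univ, true_and] at hi
      have := subgraph_edgeSet_ncard (T i) (htree i)
      rw [hi, hS] at this
      have : (T i).edgeSet.ncard = k - 1 := by omega
      rw [hE]
      rw [← Set.ncard_eq_toFinset_card']
      exact this
    have hdisj : ∀ i ∈ A, ∀ j ∈ A, i ≠ j → Disjoint (E i) (E j) := by
      intro i _ j _ hij
      rw [Finset.disjoint_left]
      intro e hei hej
      have := hedge i j hij
      rw [Set.eq_empty_iff_forall_notMem] at this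
      exact this e ⟨by simpa [hE] using hei, by simpa [hE] using hej⟩
    letI : Fintype S := S.toFinite.fintype
    set D : Finset (Sym2 (Fin n)) :=
      ((⊤ : SimpleGraph S).edgeFinset).image (Sym2.map Subtype.val) with hD
    have hDcard : D.card = k.choose 2 := by
      rw [hD, Finset.card_image_of_injective _ (Sym2.map.injective Subtype.val_injective),
        SimpleGraph.card_edgeFinset_top_eq_card_choose_two]
      congr 1
      rw [← Set.toFinset_card, ← Set.ncard_eq_toFinset_card']
      exact hS
    have hED : ∀ i ∈ A, E i ⊆ D := by
      intro i hi
      simp only [hA, Finset.mem_filter, Finset.mem_univ, true_and] at hi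
      intro e he
      simp only [hE, Set.mem_toFinset] at he
      induction e with
      | h x y =>
        have hadj : (T i).Adj x y := he
        have hx : x ∈ S := hi ▸ hadj.fst_mem
        have hy : y ∈ S := hi ▸ hadj.snd_mem
        have hne : x ≠ y := hadj.adj_sub
        simp only [hD, Finset.mem_image]
        refine ⟨s(⟨x, hx⟩, ⟨y, hy⟩), ?_, rfl⟩
        rw [SimpleGraph.mem_edgeFinset]
        exact fun hxy => hne (congrArg Subtype.val hxy)
    have hbiU : (A.biUnion E).card ≤ D.card :=
      Finset.card_le_card (Finset.biUnion_subset.mpr hED)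
    rw [Finset.card_biUnion hdisj] at hbiU
    have hsum : ∑ i ∈ A, (E i).card = A.card * (k - 1) := by
      rw [Finset.sum_congr rfl hEcard]
      simp [Finset.sum_const, mul_comm]
    rw [hsum, hDcard, Nat.choose_two_right] at hbiU
    have h2 : 2 ∣ k * (k - 1) := Nat.even_mul_pred_self k |>.two_dvd
    have hk1 : 0 < k - 1 := by omega
    have hmul : 2 * A.card * (k - 1) ≤ k * (k - 1) := by
      calc 2 * A.card * (k - 1) = 2 * (A.card * (k - 1)) := by ring
      _ ≤ 2 * (k * (k - 1) / 2) := Nat.mul_le_mul_left 2 hbiU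
      _ = k * (k - 1) := Nat.mul_div_cancel' h2
    have h2A : 2 * A.card ≤ k := Nat.le_of_mul_le_mul_right hmul hk1
    omega
  have : A.card + Aᶜ.card = ℓ := by
    rw [Finset.card_add_card_compl]
    simp
  omega

end UpperBound

section LowerBound

lemma exists_enum {V : Type*} [Finite V] (S : Set V) {k : ℕ} (hS : S.ncard = k) :
    ∃ e : Fin k → V, Function.Injective e ∧ (∀ a, e a ∈ S) ∧ ∀ x ∈ S, ∃ a, e a = x := by
  classical
  have hfin : S.Finite := S.toFinite
  have hcard : hfin.toFinset.card = k := by rw [← Set.ncard_eq_toFinset_card]; exact hS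
  set iso := (Finset.equivFinOfCardEq hcard).symm with hiso
  refine ⟨fun a => (iso a : V), ?_, ?_, ?_⟩
  · intro a b h
    exact iso.injective (Subtype.ext h)
  · intro a
    exact hfin.mem_toFinset.mp (iso a).2
  · intro x hx
    refine ⟨iso.symm ⟨x, hfin.mem_toFinset.mpr hx⟩, ?_⟩
    simp

def Hfun (k j a : ℕ) : ℕ :=
  if Odd k ∧ a = k - 1 then 2*j
  else if a / 2 < j then (if Even a then 2*j+1 else 2*j)
  else (if Even a then 2*j else 2*j+1)

lemma Hfun_ran (k j a : ℕ) : Hfun k j a = 2*j ∨ Hfun k j a = 2*j+1 := by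
  simp only [Hfun]; split_ifs <;> omega

lemma Hfun_lt {k j : ℕ} (hj : j < k/2) (a : ℕ) : Hfun k j a < k := by
  rcases Hfun_ran k j a with h | h <;> omega

lemma Hval1 {k j j' : ℕ} (hj' : j' < k/2) (hjj' : j < j') : Hfun k j (2*j') = 2*j := by
  simp only [Hfun, Nat.odd_iff, Nat.even_iff]; split_ifs <;> omega

lemma Hval2 {k j j' : ℕ} (hj' : j' < k/2) (hjj' : j < j') : Hfun k j (2*j'+1) = 2*j+1 := by
  simp only [Hfun, Nat.odd_iff, Nat.even_iff]; split_ifs <;> omega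

lemma Hval3 {k j j' : ℕ} (hj' : j' < k/2) (hjj' : j < j') : Hfun k j' (2*j) = 2*j'+1 := by
  simp only [Hfun, Nat.odd_iff, Nat.even_iff]; split_ifs <;> omega

lemma Hval4 {k j j' : ℕ} (hj' : j' < k/2) (hjj' : j < j') : Hfun k j' (2*j+1) = 2*j' := by
  simp only [Hfun, Nat.odd_iff, Nat.even_iff]; split_ifs <;> omega

/-- center indices and the pendant-attachment map, at the level of `Fin k`. -/
def cA {k : ℕ} (j : Fin (k/2)) : Fin k := ⟨2*j, by have := j.2; omega⟩
def cB {k : ℕ} (j : Fin (k/2)) : Fin k := ⟨2*j+1, by have := j.2; omega⟩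
def finH {k : ℕ} (j : Fin (k/2)) (a : Fin k) : Fin k := ⟨Hfun k j a, Hfun_lt j.2 _⟩

lemma inn_disjoint {n k : ℕ} (S : Set (Fin n)) (e : Fin k → Fin n)
    (he_inj : Function.Injective e) (he_surj : ∀ x ∈ S, ∃ a, e a = x)
    (einv : Fin n → Fin k) (heinv : ∀ a, einv (e a) = a)
    (j j' : Fin (k/2)) (hjj : (j : ℕ) < (j' : ℕ)) {x y : Fin n}
    (h1 : (dstar S (e (cA j)) (e (cB j)) (fun x => e (finH j (einv x)))).Adj x y)
    (h2 : (dstar S (e (cA j')) (e (cB j')) (fun x => e (finH j' (einv x)))).Adj x y) :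
    False := by
  have hpair : ∀ a b c d : Fin k, s(e a, e b) = s(e c, e d) →
      ((a : ℕ) = c ∧ (b : ℕ) = d) ∨ ((a : ℕ) = d ∧ (b : ℕ) = c) := by
    intro a b c d h
    rw [Sym2.eq_iff] at h
    rcases h with ⟨h1, h2⟩ | ⟨h1, h2⟩
    · exact Or.inl ⟨congrArg Fin.val (he_inj h1), congrArg Fin.val (he_inj h2)⟩
    · exact Or.inr ⟨congrArg Fin.val (he_inj h1), congrArg Fin.val (he_inj h2)⟩
  rcases dstar_adj_cases h1 with hc1 | ⟨z, hz, hz1, hz2, hzeq⟩ <;>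
    rcases dstar_adj_cases h2 with hc2 | ⟨w, hw, hw1, hw2, hweq⟩
  · -- center = center
    have := hpair _ _ _ _ (hc1.symm.trans hc2)
    simp only [cA, cB] at this
    omega
  · -- center (j) = pendant (j')
    obtain ⟨b, rfl⟩ := he_surj w hw
    simp only [heinv] at hweq
    have := hpair _ _ _ _ (hc1.symm.trans hweq)
    have hr := Hfun_ran k j' b
    simp only [cA, cB, finH] at this hr
    omega
  · -- pendant (j) = center (j')
    obtain ⟨a, rfl⟩ := he_surj z hz
    simp only [heinv] at hzeq
    have := hpair _ _ _ _ (hzeq.symm.trans hc2)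
    have hr := Hfun_ran k j a
    simp only [cA, cB, finH] at this hr
    omega
  · -- pendant = pendant
    obtain ⟨a, rfl⟩ := he_surj z hz
    obtain ⟨b, rfl⟩ := he_surj w hw
    simp only [heinv] at hzeq hweq
    have haA : (a : ℕ) ≠ 2*(j:ℕ) := fun h => hz1 (congrArg e (Fin.ext (by simpa [cA] using h)))
    have haB : (a : ℕ) ≠ 2*(j:ℕ)+1 := fun h => hz2 (congrArg e (Fin.ext (by simpa [cB] using h)))
    have hbA : (b : ℕ) ≠ 2*(j':ℕ) := fun h => hw1 (congrArg e (Fin.ext (by simpa [cA] using h)))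
    have hbB : (b : ℕ) ≠ 2*(j':ℕ)+1 := fun h => hw2 (congrArg e (Fin.ext (by simpa [cB] using h)))
    have hkey := hpair _ _ _ _ (hzeq.symm.trans hweq)
    have hra := Hfun_ran k j a
    have hrb := Hfun_ran k j' b
    simp only [finH] at hkey
    rcases hkey with ⟨hab, hH⟩ | ⟨haH, hHb⟩
    · omega
    · -- a = Hfun k j' b ∈ {2j', 2j'+1}, Hfun k j a = b
      rcases hrb.imp (fun h => haH.trans h) (fun h => haH.trans h) with ha | ha
      · rw [ha, Hval1 j'.2 hjj] at hHb
        rw [← hHb, Hval3 j'.2 hjj] at haH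
        omega
      · rw [ha, Hval2 j'.2 hjj] at hHb
        rw [← hHb, Hval4 j'.2 hjj] at haH
        omega

end LowerBound

lemma priv_edge {V : Type*} {S : Set V} {p q x y : V}
    (h : (dstar (S ∪ {p}) p q (fun _ => p)).Adj x y) :
    (x = p ∨ y = p) ∧ x ∈ S ∪ {p} ∧ y ∈ S ∪ {p} := by
  obtain ⟨hx, hy, hne, h⟩ := h
  refine ⟨?_, hx, hy⟩
  rcases h with ⟨h, -⟩ | ⟨-, h⟩ | ⟨-, h⟩ | ⟨-, h⟩ <;> tauto

lemma lower_bound {n k : ℕ} (hk2 : 2 ≤ k) (hkn : k ≤ n) (S : Set (Fin n)) (hS : S.ncard = k) :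
    InternallyDisjointTrees (⊤ : SimpleGraph (Fin n)) S (n - (k + 1) / 2) := by
  haveI : Nonempty (Fin k) := ⟨⟨0, by omega⟩⟩
  haveI : Nonempty (Fin n) := ⟨⟨0, by omega⟩⟩
  obtain ⟨e, he_inj, he_mem, he_surj⟩ := exists_enum S hS
  have hSc : (Sᶜ : Set (Fin n)).ncard = n - k := by
    have := Set.ncard_add_ncard_compl S
    simp only [Nat.card_eq_fintype_card, Fintype.card_fin] at this
    omega
  obtain ⟨g0, hg0_inj, hg0_mem, -⟩ := exists_enum (Sᶜ : Set (Fin n)) hSc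
  set g : ℕ → Fin n := fun i => if hi : i < n - k then g0 ⟨i, hi⟩ else Classical.arbitrary _
    with hgdef
  have hg_not : ∀ i, i < n - k → g i ∉ S := by
    intro i hi
    simp only [hgdef, dif_pos hi]
    exact hg0_mem _
  have hg_ne : ∀ i i', i < n - k → i' < n - k → i ≠ i' → g i ≠ g i' := by
    intro i i' hi hi' hne
    simp only [hgdef, dif_pos hi, dif_pos hi']
    intro hc
    exact hne (by simpa using congrArg Fin.val (hg0_inj hc))
  set einv : Fin n → Fin k := Function.invFun e with heinvdef
  have heinv : ∀ a, einv (e a) = a := Function.leftInverse_invFun he_inj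
  set e0 : Fin n := e ⟨0, by omega⟩ with he0
  set privT : ℕ → SimpleGraph.Subgraph (⊤ : SimpleGraph (Fin n)) :=
    fun p => dstar (S ∪ {g p}) (g p) e0 (fun _ => g p) with hprivT
  set innT : Fin (k/2) → SimpleGraph.Subgraph (⊤ : SimpleGraph (Fin n)) :=
    fun j => dstar S (e (cA j)) (e (cB j)) (fun x => e (finH j (einv x))) with hinnT
  have hsplit : n - (k+1)/2 = (n-k) + k/2 := by omega
  refine ⟨fun t => if (t : ℕ) < n - k then privT t
    else innT ⟨(t:ℕ) - (n-k), by have := t.2; omega⟩, ?_, ?_, ?_, ?_⟩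
  · -- trees
    intro t
    by_cases h : (t : ℕ) < n - k
    · beta_reduce
      rw [if_pos h]
      apply dstar_isTree
      · exact Or.inr rfl
      · exact Or.inl (he_mem _)
      · exact fun hh => hg_not _ h (hh ▸ he_mem _)
      · exact fun x _ _ _ => Or.inl rfl
    · beta_reduce
      rw [if_neg h]
      apply dstar_isTree
      · exact he_mem _
      · exact he_mem _
      · intro hh
        have := congrArg Fin.val (he_inj hh)
        simp only [cA, cB] at this
        omega
      · intro x _ _ _
        rcases Hfun_ran k _ (einv x) with hr | hr
        · exact Or.inl (congrArg e (Fin.ext (by simpa [finH, cA] using hr)))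
        · exact Or.inr (congrArg e (Fin.ext (by simpa [finH, cB] using hr)))
  · -- S ⊆ verts
    intro t
    by_cases h : (t : ℕ) < n - k
    · beta_reduce
      rw [if_pos h]
      exact Set.subset_union_left
    · beta_reduce
      rw [if_neg h]
      exact subset_rfl
  · -- vertex intersections
    intro t t' htt'
    by_cases h : (t : ℕ) < n - k <;> by_cases h' : (t' : ℕ) < n - k
    · beta_reduce
      rw [if_pos h, if_pos h']
      have hne : g t ≠ g t' := hg_ne _ _ h h' (fun hc => htt' (Fin.ext hc))
      have h1 := hg_not _ h
      have h2 := hg_not _ h'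
      ext x
      simp only [hprivT, dstar_verts, Set.mem_inter_iff, Set.mem_union, Set.mem_singleton_iff]
      constructor
      · rintro ⟨hx1 | hx1, hx2 | hx2⟩ <;> first | assumption | (exfalso; subst hx1; tauto)
      · exact fun hx => ⟨Or.inl hx, Or.inl hx⟩
    · beta_reduce
      rw [if_pos h, if_neg h']
      exact Set.union_inter_cancel_left
    · beta_reduce
      rw [if_neg h, if_pos h']
      exact Set.inter_eq_left.mpr Set.subset_union_left
    · beta_reduce
      rw [if_neg h, if_neg h']
      exact Set.inter_self S
  · -- edge disjointness
    intro t t' htt'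
    rw [Set.eq_empty_iff_forall_notMem]
    intro ed hed
    induction ed with
    | h x y =>
      obtain ⟨hm1, hm2⟩ := hed
      rw [SimpleGraph.Subgraph.mem_edgeSet] at hm1 hm2
      beta_reduce at hm1 hm2
      by_cases h : (t : ℕ) < n - k <;> by_cases h' : (t' : ℕ) < n - k
      · rw [if_pos h] at hm1
        rw [if_pos h'] at hm2
        have hne : g t ≠ g t' := hg_ne _ _ h h' (fun hc => htt' (Fin.ext hc))
        obtain ⟨hp1, -, -⟩ := priv_edge hm1
        obtain ⟨-, hx2, hy2⟩ := priv_edge hm2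
        rcases hp1 with rfl | rfl
        · rcases hx2 with hx2 | hx2
          · exact hg_not _ h hx2
          · exact hne hx2
        · rcases hy2 with hy2 | hy2
          · exact hg_not _ h hy2
          · exact hne hy2
      · rw [if_pos h] at hm1
        rw [if_neg h'] at hm2
        obtain ⟨hp1, -, -⟩ := priv_edge hm1
        have hx2 : x ∈ S := hm2.1
        have hy2 : y ∈ S := hm2.2.1
        rcases hp1 with rfl | rfl
        · exact hg_not _ h hx2
        · exact hg_not _ h hy2
      · rw [if_neg h] at hm1
        rw [if_pos h'] at hm2
        obtain ⟨hp2, -, -⟩ := priv_edge hm2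
        have hx1 : x ∈ S := hm1.1
        have hy1 : y ∈ S := hm1.2.1
        rcases hp2 with rfl | rfl
        · exact hg_not _ h' hx1
        · exact hg_not _ h' hy1
      · rw [if_neg h] at hm1
        rw [if_neg h'] at hm2
        have hjj : ((⟨(t:ℕ) - (n-k), by have := t.2; omega⟩ : Fin (k/2)) : ℕ) ≠
            ((⟨(t':ℕ) - (n-k), by have := t'.2; omega⟩ : Fin (k/2)) : ℕ) := by
          simp only
          intro hc
          apply htt'
          apply Fin.ext
          omega
        rcases lt_or_gt_of_ne hjj with hlt | hlt
        · exact inn_disjoint S e he_inj he_surj einv heinv _ _ hlt hm1 hm2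
        · exact inn_disjoint S e he_inj he_surj einv heinv _ _ hlt hm2 hm1



theorem stmt_11 (n k : ℕ) (hk2 : 2 ≤ k) (hkn : k ≤ n) :
    kappaK (⊤ : SimpleGraph (Fin n)) k = n - (k + 1) / 2 := by
  have key : ∀ S : Set (Fin n), S.ncard = k →
      kappaS (⊤ : SimpleGraph (Fin n)) S = n - (k + 1) / 2 := by
    intro S hS
    have hub : ∀ ℓ ∈ {ℓ | InternallyDisjointTrees (⊤ : SimpleGraph (Fin n)) S ℓ},
        ℓ ≤ n - (k + 1) / 2 := fun ℓ hl => upper_bound hk2 S hS hl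
    unfold kappaS
    apply le_antisymm
    · exact csSup_le ⟨0, ⟨fun i => i.elim0, fun i => i.elim0, fun i => i.elim0,
        fun i => i.elim0, fun i => i.elim0⟩⟩ hub
    · exact le_csSup ⟨n - (k + 1) / 2, hub⟩ (lower_bound hk2 hkn S hS)
  have hset : {m | ∃ S : Set (Fin n), S.ncard = k ∧ kappaS (⊤ : SimpleGraph (Fin n)) S = m}
      = {n - (k + 1) / 2} := by
    ext m
    simp only [Set.mem_setOf_eq, Set.mem_singleton_iff]
    constructor
    · rintro ⟨S, hS, rfl⟩
      exact key S hS
    · rintro rfl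
      have hinj : Function.Injective (fun a : Fin k => (⟨a, by omega⟩ : Fin n)) :=
        fun a b hab => Fin.ext (by simpa using congrArg Fin.val hab)
      have hcard : (Set.range (fun a : Fin k => (⟨a, by omega⟩ : Fin n))).ncard = k := by
        rw [← Set.image_univ, Set.ncard_image_of_injective _ hinj, Set.ncard_univ,
          Nat.card_eq_fintype_card, Fintype.card_fin]
      exact ⟨_, hcard, key _ hcard⟩
  unfold kappaK
  rw [hset, csInf_singleton]
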